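/- Let ρ, ρ', σ be positive semidefinite operators on A with ‖ρ − σ‖₁ ≤ ε, tr[ρ'] ≤ tr[σ], and ρ' ≥ ρ. Then ‖ρ' − σ‖₁ ≤ 2ε. -/

import Mathlib

open Matrix Kronecker
open scoped ComplexOrder

/-- The square root of a positive semidefinite matrix, as defined in the older Mathlib
(`Matrix.PosSemidef.sqrt`, removed since). -/
noncomputable def Matrix.PosSemidef.sqrt {n 𝕜 : Type*} [Fintype n] [RCLike 𝕜] [DecidableEq n]
    {A : Matrix n n 𝕜} (hA : Matrix.PosSemidef A) : Matrix n n 𝕜 :=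
  hA.1.eigenvectorUnitary.1 * diagonal ((↑) ∘ (√·) ∘ hA.1.eigenvalues) *
    (star hA.1.eigenvectorUnitary : Matrix n n 𝕜)

noncomputable def traceNorm {n m : Type*} [Fintype n] [Fintype m] [DecidableEq m]
    (M : Matrix n m ℂ) : ℝ :=
  ((Matrix.posSemidef_conjTranspose_mul_self M).sqrt.trace).re

noncomputable def ptraceFst {a b : Type*} [Fintype a]
    (M : Matrix (a × b) (a × b) ℂ) : Matrix b b ℂ :=
  Matrix.of fun i j => ∑ k, M (k, i) (k, j)

noncomputable def ptraceSnd {a b : Type*} [Fintype b]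
    (M : Matrix (a × b) (a × b) ℂ) : Matrix a a ℂ :=
  Matrix.of fun i j => ∑ k, M (i, k) (j, k)


section Aux
variable {n : Type*} [Fintype n] [DecidableEq n]


lemma conj_diag_mul (U : Matrix n n ℂ) (hU : U ∈ Matrix.unitaryGroup n ℂ) (f g : n → ℂ) :
    (U * diagonal f * star U) * (U * diagonal g * star U)
      = U * diagonal (fun i => f i * g i) * star U := by
  have h : star U * U = 1 := (Matrix.mem_unitaryGroup_iff').mp hU
  calc (U * diagonal f * star U) * (U * diagonal g * star U)
      = U * (diagonal f * ((star U * U) * diagonal g)) * star U := by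
        simp only [Matrix.mul_assoc]
    _ = _ := by
        rw [h, Matrix.one_mul, Matrix.diagonal_mul_diagonal, Matrix.mul_assoc]

lemma trace_conj (U : Matrix n n ℂ) (hU : U ∈ Matrix.unitaryGroup n ℂ) (D : Matrix n n ℂ) :
    (U * D * star U).trace = D.trace := by
  rw [Matrix.trace_mul_comm, ← Matrix.mul_assoc, (Matrix.mem_unitaryGroup_iff').mp hU,
    Matrix.one_mul]

/-- trace norm of a Hermitian matrix is the sum of absolute values of eigenvalues -/
lemma traceNorm_herm {X : Matrix n n ℂ} (hX : X.IsHermitian) :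
    traceNorm X = ∑ i, |hX.eigenvalues i| := by
  set U : Matrix n n ℂ := (hX.eigenvectorUnitary : Matrix n n ℂ)
  have hU : U ∈ Matrix.unitaryGroup n ℂ := hX.eigenvectorUnitary.2
  set B : Matrix n n ℂ :=
    U * diagonal (fun i => ((|hX.eigenvalues i| : ℝ) : ℂ)) * star U with hBdef
  have hB : B.PosSemidef := by
    rw [hBdef, Matrix.star_eq_conjTranspose]
    exact (Matrix.posSemidef_diagonal_iff.mpr (by
      intro i
      simpa using Complex.ofReal_nonneg.mpr (abs_nonneg _))).mul_mul_conjTranspose_same U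
  have hXspec : X = U * diagonal (RCLike.ofReal ∘ hX.eigenvalues) * star U :=
    hX.spectral_theorem
  have hBsq : B ^ 2 = Xᴴ * X := by
    rw [pow_two, hBdef, conj_diag_mul U hU, hX.eq]
    conv_rhs => rw [hXspec]
    rw [conj_diag_mul U hU]
    have hfun : (fun i => ((|hX.eigenvalues i| : ℝ) : ℂ) * ((|hX.eigenvalues i| : ℝ) : ℂ))
        = fun i => (RCLike.ofReal ∘ hX.eigenvalues) i * (RCLike.ofReal ∘ hX.eigenvalues) i := by
      funext i
      show ((|hX.eigenvalues i| : ℝ) : ℂ) * ((|hX.eigenvalues i| : ℝ) : ℂ)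
        = ((hX.eigenvalues i : ℝ) : ℂ) * ((hX.eigenvalues i : ℝ) : ℂ)
      rw [← Complex.ofReal_mul, ← Complex.ofReal_mul, abs_mul_abs_self]
    rw [hfun]
  have hEq : B = (Matrix.posSemidef_conjTranspose_mul_self X).sqrt := by
    set hA := Matrix.posSemidef_conjTranspose_mul_self X with hAdef
    set U2 : Matrix n n ℂ := (hA.1.eigenvectorUnitary : Matrix n n ℂ)
    have hU2 : U2 ∈ Matrix.unitaryGroup n ℂ := hA.1.eigenvectorUnitary.2
    have hS : hA.sqrt = U2 * diagonal (fun i => ((√(hA.1.eigenvalues i) : ℝ) : ℂ)) * star U2 :=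
      rfl
    have hSpsd : hA.sqrt.PosSemidef := by
      rw [hS, Matrix.star_eq_conjTranspose]
      exact (Matrix.posSemidef_diagonal_iff.mpr (by
        intro i
        simpa using Complex.ofReal_nonneg.mpr (Real.sqrt_nonneg _))).mul_mul_conjTranspose_same U2
    have hSsq : hA.sqrt * hA.sqrt = Xᴴ * X := by
      rw [hS, conj_diag_mul U2 hU2]
      conv_rhs => rw [hA.1.spectral_theorem, Unitary.conjStarAlgAut_apply]
      refine congrArg (fun D => U2 * diagonal D * star U2) (funext fun i => ?_)
      show ((√(hA.1.eigenvalues i) : ℝ) : ℂ) * ((√(hA.1.eigenvalues i) : ℝ) : ℂ)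
        = ((hA.1.eigenvalues i : ℝ) : ℂ)
      rw [← Complex.ofReal_mul, Real.mul_self_sqrt (hA.eigenvalues_nonneg i)]
    open scoped MatrixOrder in
    exact (CFC.mul_self_eq_mul_self_iff B hA.sqrt hB.nonneg hSpsd.nonneg).mp
      (by rw [← pow_two, hBsq, hSsq])
  rw [traceNorm, ← hEq, hBdef, trace_conj U hU, Matrix.trace_diagonal, Complex.re_sum]
  simp

lemma trace_re_herm {X : Matrix n n ℂ} (hX : X.IsHermitian) :
    X.trace.re = ∑ i, hX.eigenvalues i := by
  conv_lhs => rw [hX.spectral_theorem, Unitary.conjStarAlgAut_apply]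
  rw [trace_conj _ hX.eigenvectorUnitary.2, Matrix.trace_diagonal, Complex.re_sum]
  simp

/-- key duality bound in diagonal frame -/
lemma key_diag (g lam : n → ℝ) (hg : ∀ k, |g k| ≤ 1) (A : Matrix n n ℂ)
    (hA : A ∈ Matrix.unitaryGroup n ℂ) :
    ((A * diagonal (fun k => ((g k : ℝ) : ℂ)) * star A
        * diagonal (fun i => ((lam i : ℝ) : ℂ))).trace).re ≤ ∑ i, |lam i| := by
  have hrow : ∀ i, ∑ k, Complex.normSq (A i k) = 1 := by
    intro i
    have h1 : (A * star A) i i = (1 : Matrix n n ℂ) i i := by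
      rw [(Matrix.mem_unitaryGroup_iff).mp hA]
    have h2 : ∑ k, A i k * (starRingEnd ℂ) (A i k) = 1 := by
      simpa [Matrix.mul_apply, Matrix.star_apply, Matrix.one_apply] using h1
    have := congrArg Complex.re h2
    simpa [Complex.re_sum, Complex.mul_conj] using this
  have hdiag : ∀ i, (A * diagonal (fun k => ((g k : ℝ) : ℂ)) * star A
        * diagonal (fun i => ((lam i : ℝ) : ℂ))) i i
      = (((lam i * ∑ k, g k * Complex.normSq (A i k) : ℝ)) : ℂ) := by
    intro i
    rw [Matrix.mul_diagonal]
    have e2 : (A * diagonal (fun k => ((g k : ℝ) : ℂ)) * star A) i i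
        = ∑ k, ((g k : ℂ)) * ((Complex.normSq (A i k) : ℝ) : ℂ) := by
      rw [Matrix.mul_apply]
      refine Finset.sum_congr rfl fun k _ => ?_
      rw [Matrix.mul_diagonal, Matrix.star_apply]
      rw [show A i k * (g k : ℂ) * star (A i k)
          = (g k : ℂ) * (A i k * star (A i k)) from by ring]
      rw [show star (A i k) = (starRingEnd ℂ) (A i k) from rfl, Complex.mul_conj]
    rw [e2]
    push_cast
    ring
  have htr : ((A * diagonal (fun k => ((g k : ℝ) : ℂ)) * star A
        * diagonal (fun i => ((lam i : ℝ) : ℂ))).trace).re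
      = ∑ i, lam i * ∑ k, g k * Complex.normSq (A i k) := by
    rw [Matrix.trace, Complex.re_sum]
    refine Finset.sum_congr rfl fun i _ => ?_
    rw [Matrix.diag_apply, hdiag i, Complex.ofReal_re]
  rw [htr]
  refine Finset.sum_le_sum fun i _ => ?_
  have hs : |∑ k, g k * Complex.normSq (A i k)| ≤ 1 := by
    calc |∑ k, g k * Complex.normSq (A i k)|
        ≤ ∑ k, |g k * Complex.normSq (A i k)| := Finset.abs_sum_le_sum_abs _ _
      _ ≤ ∑ k, Complex.normSq (A i k) := by
          refine Finset.sum_le_sum fun k _ => ?_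
          rw [abs_mul, abs_of_nonneg (Complex.normSq_nonneg _)]
          exact mul_le_of_le_one_left (Complex.normSq_nonneg _) (hg k)
      _ = 1 := hrow i
  calc lam i * ∑ k, g k * Complex.normSq (A i k)
      ≤ |lam i * ∑ k, g k * Complex.normSq (A i k)| := le_abs_self _
    _ = |lam i| * |∑ k, g k * Complex.normSq (A i k)| := abs_mul _ _
    _ ≤ |lam i| * 1 := mul_le_mul_of_nonneg_left hs (abs_nonneg _)
    _ = |lam i| := mul_one _

/-- duality bound: conjugated small diagonal against a Hermitian matrix -/
lemma re_trace_conj_le (g : n → ℝ) (hg : ∀ k, |g k| ≤ 1) (V : Matrix n n ℂ)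
    (hV : V ∈ Matrix.unitaryGroup n ℂ) {X : Matrix n n ℂ} (hX : X.IsHermitian) :
    ((V * diagonal (fun k => ((g k : ℝ) : ℂ)) * star V * X).trace).re ≤ traceNorm X := by
  rw [traceNorm_herm hX]
  set Vx : Matrix n n ℂ := (hX.eigenvectorUnitary : Matrix n n ℂ) with hVxdef
  have hVx : Vx ∈ Matrix.unitaryGroup n ℂ := hX.eigenvectorUnitary.2
  have hmem : star Vx * V ∈ Matrix.unitaryGroup n ℂ := by
    rw [Matrix.mem_unitaryGroup_iff]
    rw [StarMul.star_mul, star_star]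
    calc star Vx * V * (star V * Vx)
        = star Vx * (V * star V) * Vx := by simp only [Matrix.mul_assoc]
      _ = 1 := by
          rw [(Matrix.mem_unitaryGroup_iff).mp hV, Matrix.mul_one,
            (Matrix.mem_unitaryGroup_iff').mp hVx]
  have hD : (RCLike.ofReal ∘ hX.eigenvalues : n → ℂ)
      = fun i => ((hX.eigenvalues i : ℝ) : ℂ) := rfl
  have hstar : star (star Vx * V) = star V * Vx := by rw [StarMul.star_mul, star_star]
  have htr_eq : (V * diagonal (fun k => ((g k : ℝ) : ℂ)) * star V * X).trace
      = ((star Vx * V) * diagonal (fun k => ((g k : ℝ) : ℂ)) * star (star Vx * V)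
          * diagonal (fun i => ((hX.eigenvalues i : ℝ) : ℂ))).trace := by
    rw [hstar]
    conv_lhs => rw [hX.spectral_theorem, Unitary.conjStarAlgAut_apply]
    rw [hD]
    rw [show V * diagonal (fun k => ((g k : ℝ) : ℂ)) * star V
          * (Vx * diagonal (fun i => ((hX.eigenvalues i : ℝ) : ℂ)) * star Vx)
        = (V * diagonal (fun k => ((g k : ℝ) : ℂ)) * star V * Vx
            * diagonal (fun i => ((hX.eigenvalues i : ℝ) : ℂ))) * star Vx from by
      simp only [Matrix.mul_assoc], Matrix.trace_mul_comm]
    simp only [Matrix.mul_assoc]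
  rw [htr_eq]
  exact key_diag g hX.eigenvalues hg (star Vx * V) hmem

end Aux

/-- If `‖ρ − σ‖₁ ≤ ε`, `tr[ρ'] ≤ tr[σ]` and `ρ' ≥ ρ`, then `‖ρ' − σ‖₁ ≤ 2ε`. -/
theorem traceNorm_sub_le_two_mul
    {n : Type*} [Fintype n] [DecidableEq n]
    (ρ ρ' σ : Matrix n n ℂ) (ε : ℝ) (hε : 0 < ε)
    (hρ : ρ.PosSemidef) (hρ' : ρ'.PosSemidef) (hσ : σ.PosSemidef)
    (h1 : traceNorm (ρ - σ) ≤ ε)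
    (h2 : (ρ'.trace).re ≤ (σ.trace).re)
    (h3 : (ρ' - ρ).PosSemidef) :
    traceNorm (ρ' - σ) ≤ 2 * ε := by
  have hD : (ρ - σ).IsHermitian := hρ.1.sub hσ.1
  have hH : (ρ' - σ).IsHermitian := hρ'.1.sub hσ.1
  have hP : (ρ' - ρ).IsHermitian := h3.1
  -- the "sign" diagonal for H
  set g : n → ℝ := fun i => if hH.eigenvalues i < 0 then -1 else 1 with hgdef
  have hg : ∀ k, |g k| ≤ 1 := by
    intro k
    by_cases h : hH.eigenvalues k < 0 <;> simp [hgdef, h]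
  set V : Matrix n n ℂ := (hH.eigenvectorUnitary : Matrix n n ℂ) with hVdef
  have hV : V ∈ Matrix.unitaryGroup n ℂ := hH.eigenvectorUnitary.2
  set W : Matrix n n ℂ := V * diagonal (fun k => ((g k : ℝ) : ℂ)) * star V with hWdef
  -- Step A : traceNorm H = re tr (W * H)
  have stepA : traceNorm (ρ' - σ) = ((W * (ρ' - σ)).trace).re := by
    rw [traceNorm_herm hH]
    have hspec : (ρ' - σ) = V * diagonal (RCLike.ofReal ∘ hH.eigenvalues) * star V :=
      hH.spectral_theorem
    have hDl : (RCLike.ofReal ∘ hH.eigenvalues : n → ℂ)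
        = fun i => ((hH.eigenvalues i : ℝ) : ℂ) := rfl
    conv_rhs => rw [hspec, hDl, hWdef]
    rw [conj_diag_mul V hV, trace_conj V hV, Matrix.trace_diagonal, Complex.re_sum]
    refine Finset.sum_congr rfl fun i _ => ?_
    rw [← Complex.ofReal_mul, Complex.ofReal_re, hgdef]
    by_cases h : hH.eigenvalues i < 0
    · simp [h, abs_of_neg h]
    · simp [h, abs_of_nonneg (not_lt.mp h)]
  -- split
  have hsplit : W * (ρ' - σ) = W * (ρ' - ρ) + W * (ρ - σ) := by
    rw [← Matrix.mul_add]
    congr 1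
    abel
  -- bound for (ρ - σ)
  have bD : traceNorm (ρ - σ) ≤ ε := h1
  -- trace of P bounded by ε
  have bP : traceNorm (ρ' - ρ) ≤ ε := by
    have e1 : traceNorm (ρ' - ρ) = ((ρ' - ρ).trace).re := by
      rw [traceNorm_herm hP, trace_re_herm hP]
      exact Finset.sum_congr rfl fun i _ => abs_of_nonneg (h3.eigenvalues_nonneg i)
    have e2 : ((ρ' - ρ).trace).re ≤ ((σ - ρ).trace).re := by
      rw [Matrix.trace_sub, Matrix.trace_sub, Complex.sub_re, Complex.sub_re]
      linarith
    have e3 : ((σ - ρ).trace).re ≤ traceNorm (ρ - σ) := by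
      have hneg : (σ - ρ) = -(ρ - σ) := by abel
      rw [hneg, Matrix.trace_neg, Complex.neg_re, trace_re_herm hD, traceNorm_herm hD,
        ← Finset.sum_neg_distrib]
      exact Finset.sum_le_sum fun i _ => neg_le_abs _
    linarith
  -- duality bounds
  have d1 : ((W * (ρ' - ρ)).trace).re ≤ traceNorm (ρ' - ρ) := re_trace_conj_le g hg V hV hP
  have d2 : ((W * (ρ - σ)).trace).re ≤ traceNorm (ρ - σ) := re_trace_conj_le g hg V hV hD
  rw [stepA, hsplit, Matrix.trace_add, Complex.add_re]
  linarith
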